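/- arXiv:2404.06697 — 3 statements merged into one kernel-verified Lean document; each statement's English description precedes it below -/
import Mathlib

section
/- For every integer a, the homogeneous component of B in bidegree (a, a−1) is zero, and the homogeneous component of B in bidegree (a, a−2) is zero. -/
/-- Index type for the `ℤ/2`-basis of Stong's ring `M`:  `Sum.inl (i,j)` indexes the
positive-cone basis element `x₂^i·y₂^j`, and `Sum.inr (n,m)` indexes the negative-cone basis
element `θ₂/(x₂^n·y₂^m)`. -/
abbrev MIdx : Type := (ℕ × ℕ) ⊕ (ℕ × ℕ)

/-- Index type for the `ℤ/2`-basis of `B = M[c,b]/(c²-x₂c-y₂b)`:  a basis element of `M`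
together with a monomial `b^p` (`Sum.inl p`) or `c·b^p` (`Sum.inr p`). -/
abbrev BIdx : Type := MIdx × (ℕ ⊕ ℕ)

/-- The `ℤ×ℤ`-degree of each basis element of `B`:  `x₂^i·y₂^j` has degree `(-j, i+j)`,
`θ₂/(x₂^n·y₂^m)` has degree `(2+m, -2-n-m)`, `deg c = (0,1)` and `deg b = (1,1)`. -/
def bdeg : BIdx → ℤ × ℤ
  | (Sum.inl (i, j), Sum.inl p) => ((p : ℤ) - (j : ℤ), (i : ℤ) + (j : ℤ) + (p : ℤ))
  | (Sum.inl (i, j), Sum.inr p) => ((p : ℤ) - (j : ℤ), (i : ℤ) + (j : ℤ) + (p : ℤ) + 1)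
  | (Sum.inr (n, m), Sum.inl p) => (2 + (m : ℤ) + (p : ℤ), (p : ℤ) - 2 - (n : ℤ) - (m : ℤ))
  | (Sum.inr (n, m), Sum.inr p) => (2 + (m : ℤ) + (p : ℤ), (p : ℤ) - 2 - (n : ℤ) - (m : ℤ) + 1)

/-- (Lemma 2.13 of the paper.)  For every integer `a`, the homogeneous
component of `B` in bidegree `(a, a-1)` is zero, and the homogeneous component of `B` in
bidegree `(a, a-2)` is zero. -/
theorem component_eq_bot_of_gap
    -- `M` is Stong's `RO(C₂)`-graded Bredon cohomology ring of a point: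
    -- a commutative `ℤ/2`-algebra, free on the basis `x₂^i·y₂^j`, `θ₂/(x₂^n·y₂^m)` ...
    (M : Type) [CommRing M] [Algebra (ZMod 2) M]
    (basM : Module.Basis MIdx (ZMod 2) M)
    (hMone : basM (Sum.inl (0, 0)) = 1)
    -- ... with positive-cone elements multiplying as monomials in `F₂[x₂,y₂]` ...
    (hMmul₁ : ∀ i j i' j' : ℕ,
      basM (Sum.inl (i, j)) * basM (Sum.inl (i', j')) = basM (Sum.inl (i + i', j + j')))
    -- ... with `x₂^i·y₂^j · θ₂/(x₂^n·y₂^m) = θ₂/(x₂^{n-i}·y₂^{m-j})` if `i ≤ n` and `j ≤ m`,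
    -- and `= 0` otherwise ...
    (hMmul₂ : ∀ i j n m : ℕ,
      basM (Sum.inl (i, j)) * basM (Sum.inr (n, m)) =
        if i ≤ n ∧ j ≤ m then basM (Sum.inr (n - i, m - j)) else 0)
    -- ... and with the product of any two negative-cone basis elements equal to `0`.
    (hMmul₃ : ∀ nm nm' : ℕ × ℕ, basM (Sum.inr nm) * basM (Sum.inr nm') = 0)
    -- `B = M[c,b]/(c² - x₂·c - y₂·b)` is a commutative graded `M`-algebra:
    (B : Type) [CommRing B] [Algebra (ZMod 2) B] [Algebra M B]
    (x₂ y₂ c bb : B) (θ : ℕ → ℕ → B)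
    (hx₂ : ∀ i j : ℕ, algebraMap M B (basM (Sum.inl (i, j))) = x₂ ^ i * y₂ ^ j)
    (hθ : ∀ n m : ℕ, algebraMap M B (basM (Sum.inr (n, m))) = θ n m)
    (hrel : c ^ 2 - x₂ * c - y₂ * bb = 0)
    -- `B` is free over `ℤ/2` on the products of basis elements of `M` with the
    -- monomials `b^p` and `c·b^p`:
    (bas : Module.Basis BIdx (ZMod 2) B)
    (hbas₁ : ∀ i j p : ℕ, bas (Sum.inl (i, j), Sum.inl p) = x₂ ^ i * y₂ ^ j * bb ^ p)
    (hbas₂ : ∀ i j p : ℕ, bas (Sum.inl (i, j), Sum.inr p) = x₂ ^ i * y₂ ^ j * c * bb ^ p)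
    (hbas₃ : ∀ n m p : ℕ, bas (Sum.inr (n, m), Sum.inl p) = θ n m * bb ^ p)
    (hbas₄ : ∀ n m p : ℕ, bas (Sum.inr (n, m), Sum.inr p) = θ n m * c * bb ^ p)
    -- the `ℤ×ℤ`-grading of `B`, for which each of the above basis elements is homogeneous
    -- of the expected degree:
    (𝒜 : ℤ × ℤ → Submodule (ZMod 2) B) [GradedAlgebra 𝒜]
    (hdeg : ∀ k : BIdx, bas k ∈ 𝒜 (bdeg k))
    :
    ∀ a : ℤ, 𝒜 (a, a - 1) = ⊥ ∧ 𝒜 (a, a - 2) = ⊥ := by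

  have key : ∀ d : ℤ × ℤ, (∀ k : BIdx, bdeg k ≠ d) → 𝒜 d = ⊥ := by
    intro d hd
    rw [Submodule.eq_bot_iff]
    intro z hz
    have htop : z ∈ Submodule.span (ZMod 2) (Set.range bas) := by
      rw [bas.span_eq]; trivial
    have hP : ((DirectSum.decompose 𝒜 z) d : B) = 0 := by
      refine Submodule.span_induction ?_ ?_ ?_ ?_ htop
      · rintro _ ⟨k, rfl⟩
        exact DirectSum.decompose_of_mem_ne 𝒜 (hdeg k) (hd k)
      · simp
      · intro x y _ _ hx0 hy0
        rw [DirectSum.decompose_add, DirectSum.add_apply]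
        push_cast
        rw [hx0, hy0, add_zero]
      · intro r x _ hx0
        rw [DirectSum.decompose_smul, DFinsupp.smul_apply]
        push_cast
        rw [hx0, smul_zero]
    rw [DirectSum.decompose_of_mem_same 𝒜 hz] at hP
    exact hP
  intro a
  constructor <;>
  · apply key
    rintro ⟨⟨i,j⟩|⟨n,m⟩, p|p⟩ h <;>
      (simp only [bdeg, Prod.ext_iff] at h; omega)
end

section
/- For all integers a, b with b < 0 and a ≤ b + 2, the homogeneous component of B in bidegree (a, b) is zero. -/
/-- (First part of Corollary 2.14 of the paper.)  For all integers `a, b`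
with `b < 0` and `a ≤ b + 2`, the homogeneous component of `B` in bidegree `(a, b)` is
zero. -/
theorem component_eq_bot_of_neg_weight
    -- `M` is Stong's `RO(C₂)`-graded Bredon cohomology ring of a point:
    -- a commutative `ℤ/2`-algebra, free on the basis `x₂^i·y₂^j`, `θ₂/(x₂^n·y₂^m)` ...
    (M : Type) [CommRing M] [Algebra (ZMod 2) M]
    (basM : Module.Basis MIdx (ZMod 2) M)
    (hMone : basM (Sum.inl (0, 0)) = 1)
    -- ... with positive-cone elements multiplying as monomials in `F₂[x₂,y₂]` ...
    (hMmul₁ : ∀ i j i' j' : ℕ,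
      basM (Sum.inl (i, j)) * basM (Sum.inl (i', j')) = basM (Sum.inl (i + i', j + j')))
    -- ... with `x₂^i·y₂^j · θ₂/(x₂^n·y₂^m) = θ₂/(x₂^{n-i}·y₂^{m-j})` if `i ≤ n` and `j ≤ m`,
    -- and `= 0` otherwise ...
    (hMmul₂ : ∀ i j n m : ℕ,
      basM (Sum.inl (i, j)) * basM (Sum.inr (n, m)) =
        if i ≤ n ∧ j ≤ m then basM (Sum.inr (n - i, m - j)) else 0)
    -- ... and with the product of any two negative-cone basis elements equal to `0`.
    (hMmul₃ : ∀ nm nm' : ℕ × ℕ, basM (Sum.inr nm) * basM (Sum.inr nm') = 0)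
    -- `B = M[c,b]/(c² - x₂·c - y₂·b)` is a commutative graded `M`-algebra:
    (B : Type) [CommRing B] [Algebra (ZMod 2) B] [Algebra M B]
    (x₂ y₂ c bb : B) (θ : ℕ → ℕ → B)
    (hx₂ : ∀ i j : ℕ, algebraMap M B (basM (Sum.inl (i, j))) = x₂ ^ i * y₂ ^ j)
    (hθ : ∀ n m : ℕ, algebraMap M B (basM (Sum.inr (n, m))) = θ n m)
    (hrel : c ^ 2 - x₂ * c - y₂ * bb = 0)
    -- `B` is free over `ℤ/2` on the products of basis elements of `M` with the
    -- monomials `b^p` and `c·b^p`: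
    (bas : Module.Basis BIdx (ZMod 2) B)
    (hbas₁ : ∀ i j p : ℕ, bas (Sum.inl (i, j), Sum.inl p) = x₂ ^ i * y₂ ^ j * bb ^ p)
    (hbas₂ : ∀ i j p : ℕ, bas (Sum.inl (i, j), Sum.inr p) = x₂ ^ i * y₂ ^ j * c * bb ^ p)
    (hbas₃ : ∀ n m p : ℕ, bas (Sum.inr (n, m), Sum.inl p) = θ n m * bb ^ p)
    (hbas₄ : ∀ n m p : ℕ, bas (Sum.inr (n, m), Sum.inr p) = θ n m * c * bb ^ p)
    -- the `ℤ×ℤ`-grading of `B`, for which each of the above basis elements is homogeneous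
    -- of the expected degree:
    (𝒜 : ℤ × ℤ → Submodule (ZMod 2) B) [GradedAlgebra 𝒜]
    (hdeg : ∀ k : BIdx, bas k ∈ 𝒜 (bdeg k))
    :
    ∀ a b : ℤ, b < 0 → a ≤ b + 2 → 𝒜 (a, b) = ⊥ := by
  classical
  intro a b hb hab
  rw [eq_bot_iff]
  intro v hv
  set π : B →ₗ[ZMod 2] B :=
    (𝒜 (a, b)).subtype ∘ₗ
      (DirectSum.component (ZMod 2) (ℤ × ℤ) (fun i => ↥(𝒜 i)) (a, b)) ∘ₗ
      (DirectSum.decomposeLinearEquiv 𝒜 : B →ₗ[ZMod 2] _) with hπ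
  have hπv : π v = v := by
    simp only [hπ, LinearMap.comp_apply, DirectSum.decomposeLinearEquiv_apply,
      DirectSum.component, Submodule.subtype_apply]
    exact DirectSum.decompose_of_mem_same 𝒜 hv
  have hπbas : ∀ k : BIdx, π (bas k) = 0 := by
    intro k
    have hne : bdeg k ≠ (a, b) := by
      intro h
      rcases k with ⟨(⟨i, j⟩ | ⟨n, m⟩), p | p⟩ <;>
        simp only [bdeg, Prod.ext_iff] at h <;> omega
    simp only [hπ, LinearMap.comp_apply, DirectSum.decomposeLinearEquiv_apply,
      DirectSum.component, Submodule.subtype_apply]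
    exact DirectSum.decompose_of_mem_ne 𝒜 (hdeg k) hne
  have hzero : π v = 0 := by
    conv_lhs => rw [← bas.linearCombination_repr v]
    rw [Finsupp.linearCombination_apply, Finsupp.sum, map_sum]
    simp [hπbas]
  rw [Submodule.mem_bot, ← hπv, hzero]
end

section
/- The homogeneous component of B in bidegree (a, 0) is: the one-dimensional F₂-line spanned by 1 when a = 0; zero for every a ≤ 2 with a ≠ 0; one-dimensional over F₂, spanned by the nonzero element θ₂·c·b, when a = 3; and nonzero for every a ≥ 4, containing the nonzero element (θ₂/x₂^{a−4})·b^{a−2}. -/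
/-- The homogeneous component of `B` in bidegree `(a, 0)` is:  the
one-dimensional `F₂`-line spanned by `1` when `a = 0`;  zero for every `a ≤ 2` with `a ≠ 0`;
one-dimensional over `F₂`, spanned by the nonzero element `θ₂·c·b`, when `a = 3`;  and
nonzero for every `a ≥ 4`, containing the nonzero element `(θ₂/x₂^{a-4})·b^{a-2}`.
(This combines the second part of Corollary 2.14 with the refinement in the proof of
Corollary 5.4 of the paper.) -/
theorem component_integer_degrees
    -- `M` is Stong's `RO(C₂)`-graded Bredon cohomology ring of a point:
    -- a commutative `ℤ/2`-algebra, free on the basis `x₂^i·y₂^j`, `θ₂/(x₂^n·y₂^m)` ...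
    (M : Type) [CommRing M] [Algebra (ZMod 2) M]
    (basM : Module.Basis MIdx (ZMod 2) M)
    (hMone : basM (Sum.inl (0, 0)) = 1)
    -- ... with positive-cone elements multiplying as monomials in `F₂[x₂,y₂]` ...
    (hMmul₁ : ∀ i j i' j' : ℕ,
      basM (Sum.inl (i, j)) * basM (Sum.inl (i', j')) = basM (Sum.inl (i + i', j + j')))
    -- ... with `x₂^i·y₂^j · θ₂/(x₂^n·y₂^m) = θ₂/(x₂^{n-i}·y₂^{m-j})` if `i ≤ n` and `j ≤ m`,
    -- and `= 0` otherwise ...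
    (hMmul₂ : ∀ i j n m : ℕ,
      basM (Sum.inl (i, j)) * basM (Sum.inr (n, m)) =
        if i ≤ n ∧ j ≤ m then basM (Sum.inr (n - i, m - j)) else 0)
    -- ... and with the product of any two negative-cone basis elements equal to `0`.
    (hMmul₃ : ∀ nm nm' : ℕ × ℕ, basM (Sum.inr nm) * basM (Sum.inr nm') = 0)
    -- `B = M[c,b]/(c² - x₂·c - y₂·b)` is a commutative graded `M`-algebra:
    (B : Type) [CommRing B] [Algebra (ZMod 2) B] [Algebra M B]
    (x₂ y₂ c bb : B) (θ : ℕ → ℕ → B)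
    (hx₂ : ∀ i j : ℕ, algebraMap M B (basM (Sum.inl (i, j))) = x₂ ^ i * y₂ ^ j)
    (hθ : ∀ n m : ℕ, algebraMap M B (basM (Sum.inr (n, m))) = θ n m)
    (hrel : c ^ 2 - x₂ * c - y₂ * bb = 0)
    -- `B` is free over `ℤ/2` on the products of basis elements of `M` with the
    -- monomials `b^p` and `c·b^p`:
    (bas : Module.Basis BIdx (ZMod 2) B)
    (hbas₁ : ∀ i j p : ℕ, bas (Sum.inl (i, j), Sum.inl p) = x₂ ^ i * y₂ ^ j * bb ^ p)
    (hbas₂ : ∀ i j p : ℕ, bas (Sum.inl (i, j), Sum.inr p) = x₂ ^ i * y₂ ^ j * c * bb ^ p)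
    (hbas₃ : ∀ n m p : ℕ, bas (Sum.inr (n, m), Sum.inl p) = θ n m * bb ^ p)
    (hbas₄ : ∀ n m p : ℕ, bas (Sum.inr (n, m), Sum.inr p) = θ n m * c * bb ^ p)
    -- the `ℤ×ℤ`-grading of `B`, for which each of the above basis elements is homogeneous
    -- of the expected degree:
    (𝒜 : ℤ × ℤ → Submodule (ZMod 2) B) [GradedAlgebra 𝒜]
    (hdeg : ∀ k : BIdx, bas k ∈ 𝒜 (bdeg k))
    :
    (𝒜 (0, 0) = Submodule.span (ZMod 2) {(1 : B)} ∧ (1 : B) ≠ 0) ∧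
    (∀ a : ℤ, a ≤ 2 → a ≠ 0 → 𝒜 (a, 0) = ⊥) ∧
    (𝒜 (3, 0) = Submodule.span (ZMod 2) {θ 0 0 * c * bb} ∧ θ 0 0 * c * bb ≠ 0) ∧
    (∀ a : ℤ, 4 ≤ a →
      θ (a - 4).toNat 0 * bb ^ (a - 2).toNat ≠ 0 ∧
      θ (a - 4).toNat 0 * bb ^ (a - 2).toNat ∈ 𝒜 (a, 0) ∧
      𝒜 (a, 0) ≠ ⊥) := by
  classical
  -- Each graded piece is spanned by the basis elements of that degree.
  have keyeq : ∀ d : ℤ × ℤ,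
      𝒜 d = Submodule.span (ZMod 2) (bas '' {k | bdeg k = d}) := by
    intro d
    apply le_antisymm
    · intro x hx
      let proj : B →ₗ[ZMod 2] B :=
        (𝒜 d).subtype ∘ₗ (DirectSum.component (ZMod 2) (ℤ × ℤ) (fun i => 𝒜 i) d)
          ∘ₗ (DirectSum.decomposeLinearEquiv 𝒜).toLinearMap
      have hproj : ∀ y : B, proj y = ((DirectSum.decompose 𝒜 y) d : B) := fun y => rfl
      have hx' : proj x = x := by
        rw [hproj]; exact DirectSum.decompose_of_mem_same 𝒜 hx
      have hrep := bas.linearCombination_repr x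
      suffices h : proj x ∈ Submodule.span (ZMod 2) (bas '' {k | bdeg k = d}) by
        rwa [hx'] at h
      rw [← hrep, Finsupp.linearCombination_apply, map_finsuppSum]
      apply Submodule.sum_mem
      intro k hk
      dsimp only
      rw [LinearMap.map_smul]
      by_cases hkd : bdeg k = d
      · apply Submodule.smul_mem
        have hpk : proj (bas k) = bas k := by
          rw [hproj]; exact DirectSum.decompose_of_mem_same 𝒜 (hkd ▸ hdeg k)
        rw [hpk]
        exact Submodule.subset_span ⟨k, hkd, rfl⟩
      · have hpk : proj (bas k) = 0 := by
          rw [hproj]; exact DirectSum.decompose_of_mem_ne 𝒜 (hdeg k) hkd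
        rw [hpk, smul_zero]; exact Submodule.zero_mem _
    · rw [Submodule.span_le]
      rintro _ ⟨k, hk, rfl⟩
      exact hk ▸ hdeg k
  refine ⟨⟨?_, ?_⟩, ?_, ⟨?_, ?_⟩, ?_⟩
  · have hset : {k : BIdx | bdeg k = ((0 : ℤ), (0 : ℤ))} =
        {((Sum.inl (0, 0) : MIdx), (Sum.inl 0 : ℕ ⊕ ℕ))} := by
      ext ⟨⟨i, j⟩ | ⟨n, m⟩, p | p⟩ <;>
        simp [bdeg, Prod.ext_iff] <;> omega
    have hone : bas ((Sum.inl (0, 0) : MIdx), (Sum.inl 0 : ℕ ⊕ ℕ)) = 1 := by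
      rw [hbas₁]; ring
    rw [keyeq, hset, Set.image_singleton, hone]
  · have hone : bas ((Sum.inl (0, 0) : MIdx), (Sum.inl 0 : ℕ ⊕ ℕ)) = 1 := by
      rw [hbas₁]; ring
    exact hone ▸ bas.ne_zero _
  · intro a ha ha0
    have hset : {k : BIdx | bdeg k = (a, (0 : ℤ))} = (∅ : Set BIdx) := by
      ext ⟨⟨i, j⟩ | ⟨n, m⟩, p | p⟩ <;>
        simp [bdeg, Prod.ext_iff] <;> omega
    rw [keyeq, hset, Set.image_empty, Submodule.span_empty]
  · have hset : {k : BIdx | bdeg k = ((3 : ℤ), (0 : ℤ))} =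
        {((Sum.inr (0, 0) : MIdx), (Sum.inr 1 : ℕ ⊕ ℕ))} := by
      ext ⟨⟨i, j⟩ | ⟨n, m⟩, p | p⟩ <;>
        simp [bdeg, Prod.ext_iff] <;> omega
    have helt : bas ((Sum.inr (0, 0) : MIdx), (Sum.inr 1 : ℕ ⊕ ℕ)) = θ 0 0 * c * bb := by
      rw [hbas₄, pow_one]
    rw [keyeq, hset, Set.image_singleton, helt]
  · have helt : bas ((Sum.inr (0, 0) : MIdx), (Sum.inr 1 : ℕ ⊕ ℕ)) = θ 0 0 * c * bb := by
      rw [hbas₄, pow_one]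
    exact helt ▸ bas.ne_zero _
  · intro a ha
    have helt : bas ((Sum.inr ((a - 4).toNat, 0) : MIdx), (Sum.inl (a - 2).toNat : ℕ ⊕ ℕ)) =
        θ (a - 4).toNat 0 * bb ^ (a - 2).toNat := hbas₃ _ _ _
    have hne : θ (a - 4).toNat 0 * bb ^ (a - 2).toNat ≠ 0 := helt ▸ bas.ne_zero _
    have hd : bdeg ((Sum.inr ((a - 4).toNat, 0) : MIdx), (Sum.inl (a - 2).toNat : ℕ ⊕ ℕ))
        = (a, (0 : ℤ)) := by
      simp only [bdeg, Prod.mk.injEq, Nat.cast_zero]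
      omega
    have hmem : θ (a - 4).toNat 0 * bb ^ (a - 2).toNat ∈ 𝒜 (a, 0) := by
      have := hdeg ((Sum.inr ((a - 4).toNat, 0) : MIdx), (Sum.inl (a - 2).toNat : ℕ ⊕ ℕ))
      rw [helt, hd] at this
      exact this
    refine ⟨hne, hmem, ?_⟩
    intro hbot
    rw [hbot, Submodule.mem_bot] at hmem
    exact hne hmem
end
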